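/- Let f be a continuous real-valued function on a convex set S in a real Banach space E. Then f is both semistrictly quasiconvex and semistrictly quasiconcave on S if and only if for all x, y ∈ S and λ ∈ (0,1) there exists a number b = b(x,y,λ) with 0 < λ·b < 1 such that f(x + λ(y − x)) = λ·b·f(y) + (1 − λ·b)·f(x). -/

import Mathlib

def SemistrictlyQuasiconvex {E : Type*} [NormedAddCommGroup E] [NormedSpace ℝ E]
    (S : Set E) (f : E → ℝ) : Prop :=
  ∀ x ∈ S, ∀ y ∈ S, ∀ l ∈ Set.Ioo (0:ℝ) 1,
    f y < f x → f (x + l • (y - x)) < f x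

lemma seg_mem {E : Type*} [NormedAddCommGroup E] [NormedSpace ℝ E]
    {S : Set E} (hSc : Convex ℝ S) {x y : E} (hx : x ∈ S) (hy : y ∈ S)
    {t : ℝ} (ht : t ∈ Set.Icc (0:ℝ) 1) : x + t • (y - x) ∈ S := by
  have := hSc hx hy (a := 1 - t) (b := t) (by linarith [ht.2]) ht.1 (by ring)
  have e : (1 - t) • x + t • y = x + t • (y - x) := by module
  rwa [e] at this

lemma quasi_of_ssqc {E : Type*} [NormedAddCommGroup E] [NormedSpace ℝ E]
    {S : Set E} (hSc : Convex ℝ S) {f : E → ℝ} (hf : ContinuousOn f S)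
    (h : SemistrictlyQuasiconvex S f) {x y : E} (hx : x ∈ S) (hy : y ∈ S)
    {l : ℝ} (hl : l ∈ Set.Ioo (0:ℝ) 1) :
    f (x + l • (y - x)) ≤ max (f x) (f y) := by
  obtain ⟨hl0, hl1⟩ := hl
  by_contra hC
  push_neg at hC
  set g : ℝ → E := fun t => x + t • (y - x) with hg
  have hgc : Continuous g := by continuity
  have hmem : ∀ t ∈ Set.Icc (0:ℝ) 1, g t ∈ S := fun t ht => seg_mem hSc hx hy ht
  have hcont : ContinuousOn (f ∘ g) (Set.Icc 0 l) := by
    apply hf.comp hgc.continuousOn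
    intro t ht
    exact hmem t ⟨ht.1, le_trans ht.2 hl1.le⟩
  have hg0 : f (g 0) = f x := by simp [hg]
  -- IVT to find t1 ∈ (0, l) with f (g t1) = c
  set c : ℝ := (max (f x) (f y) + f (g l)) / 2 with hc
  have hcmem : c ∈ Set.Ioo (f (g 0)) (f (g l)) := by
    constructor
    · rw [hg0]; have := le_max_left (f x) (f y); simp only [hc]; linarith [hC]
    · simp only [hc]; linarith [hC]
  have := intermediate_value_Ioo hl0.le hcont hcmem
  obtain ⟨t1, ht1, ht1v⟩ := this
  simp only [Function.comp_apply] at ht1v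
  have ht1I : t1 ∈ Set.Icc (0:ℝ) 1 := ⟨ht1.1.le, le_trans ht1.2.le hl1.le⟩
  have hpS : g t1 ∈ S := hmem t1 ht1I
  -- apply semistrict quasiconvexity from g t1 toward y
  set m : ℝ := (l - t1) / (1 - t1) with hm
  have h1t1 : (0:ℝ) < 1 - t1 := by linarith [ht1.2, hl1]
  have hm0 : 0 < m := div_pos (by linarith [ht1.2]) h1t1
  have hm1 : m < 1 := by rw [hm, div_lt_one h1t1]; linarith [hl1]
  have hfy : f y < f (g t1) := by
    rw [ht1v]; simp only [hc]
    have := le_max_right (f x) (f y); linarith [hC]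
  have hkey := h (g t1) hpS y hy m ⟨hm0, hm1⟩ hfy
  have heq : g t1 + m • (y - g t1) = g l := by
    have hms : m * (1 - t1) = l - t1 := by
      rw [hm]; field_simp
    simp only [hg]
    have : (t1 + m * (1 - t1)) = l := by rw [hms]; ring
    rw [show x + l • (y - x) = x + (t1 + m * (1 - t1)) • (y - x) by rw [this]]
    module
  rw [heq, ht1v] at hkey
  simp only [hc] at hkey
  linarith [hC]

lemma exists_b_aux (l A B C : ℝ) (hl0 : 0 < l) (hAB : A ≠ B)
    (hlo : min A B < C) (hhi : C < max A B) :
    ∃ b : ℝ, 0 < l * b ∧ l * b < 1 ∧ C = l * b * B + (1 - l * b) * A := by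
  refine ⟨(C - A) / (B - A) / l, ?_, ?_, ?_⟩ <;>
    rw [mul_div_cancel₀ _ (ne_of_gt hl0)]
  · rcases lt_or_gt_of_ne hAB with hab | hab
    · have := min_eq_left hab.le ▸ hlo
      exact div_pos (by rw [min_eq_left hab.le] at hlo; linarith) (by linarith)
    · apply div_pos_of_neg_of_neg
      · rw [max_eq_left hab.le] at hhi; linarith
      · linarith
  · rcases lt_or_gt_of_ne hAB with hab | hab
    · rw [div_lt_one (by linarith)]
      rw [max_eq_right hab.le] at hhi; linarith
    · rw [div_lt_one_of_neg (by linarith)]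
      rw [min_eq_right hab.le] at hlo; linarith
  · have hBA : B - A ≠ 0 := sub_ne_zero.mpr (Ne.symm hAB)
    field_simp
    ring

theorem stmt_9 {E : Type*} [NormedAddCommGroup E] [NormedSpace ℝ E] [CompleteSpace E]
    {S : Set E} (hSc : Convex ℝ S)
    (f : E → ℝ) (hf : ContinuousOn f S) :
    (SemistrictlyQuasiconvex S f ∧ SemistrictlyQuasiconvex S (fun x => -f x)) ↔
      (∀ x ∈ S, ∀ y ∈ S, ∀ l ∈ Set.Ioo (0:ℝ) 1,
        ∃ b : ℝ, 0 < l * b ∧ l * b < 1 ∧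
          f (x + l • (y - x)) = l * b * f y + (1 - l * b) * f x) := by
  constructor
  · rintro ⟨h1, h2⟩ x hx y hy l hl
    obtain ⟨hl0, hl1⟩ := hl
    set z := x + l • (y - x) with hz
    have hzy : y + (1 - l) • (x - y) = z := by
      rw [hz]; module
    by_cases hAB : f x = f y
    · -- f z = f x via both quasiconvexity lemmas
      have hle := quasi_of_ssqc hSc hf h1 hx hy ⟨hl0, hl1⟩
      have hge := quasi_of_ssqc hSc (hf.neg) h2 hx hy ⟨hl0, hl1⟩
      rw [← hAB, max_self] at hle
      simp only [Pi.neg_apply] at hge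
      rw [← hAB] at hge
      simp only [max_self] at hge
      have hzx : f z = f x := le_antisymm hle (by
        have : -f z ≤ -f x := hge
        linarith)
      refine ⟨1 / (2 * l), ?_, ?_, ?_⟩
      · rw [mul_one_div]; positivity
      · rw [mul_one_div, div_lt_one (by linarith)]; linarith
      · rw [mul_one_div, hzx, ← hAB]; field_simp; ring
    · -- strict betweenness
      have hstrict : min (f x) (f y) < f z ∧ f z < max (f x) (f y) := by
        rcases lt_or_gt_of_ne hAB with hab | hab
        · -- f x < f y : f z < f y from h1 (y→x), f z > f x from h2 (x→y)
          have hup : f z < f y := by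
            have := h1 y hy x hx (1 - l) ⟨by linarith, by linarith⟩ hab
            rwa [hzy] at this
          have hdn : f x < f z := by
            have := h2 x hx y hy l ⟨hl0, hl1⟩ (by simpa using neg_lt_neg hab)
            simp only at this
            rw [← hz] at this
            linarith
          exact ⟨by rw [min_eq_left hab.le]; exact hdn,
                 by rw [max_eq_right hab.le]; exact hup⟩
        · have hup : f z < f x := by
            have := h1 x hx y hy l ⟨hl0, hl1⟩ hab
            rwa [← hz] at this
          have hdn : f y < f z := by
            have := h2 y hy x hx (1 - l) ⟨by linarith, by linarith⟩
              (by simpa using neg_lt_neg hab)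
            simp only at this
            rw [hzy] at this
            linarith
          exact ⟨by rw [min_eq_right hab.le]; exact hdn,
                 by rw [max_eq_left hab.le]; exact hup⟩
      obtain ⟨b, hb1, hb2, hb3⟩ := exists_b_aux l (f x) (f y) (f z) hl0 hAB hstrict.1 hstrict.2
      exact ⟨b, hb1, hb2, hb3⟩
  · intro h
    constructor
    · intro x hx y hy l hl hfy
      obtain ⟨b, hb1, hb2, hb3⟩ := h x hx y hy l hl
      nlinarith
    · intro x hx y hy l hl hfy
      simp only at hfy ⊢
      obtain ⟨b, hb1, hb2, hb3⟩ := h x hx y hy l hl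
      nlinarith
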